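/- Let n, k ≥ 2 and let K be a field in which every polynomial of degree exactly n has a root. Let B_1, …, B_n ∈ M_n(K) be matrices of rank k all having the same row space. Then there exist scalars λ_1, …, λ_n ∈ K, not all zero, such that the matrix λ_1B_1 + ⋯ + λ_nB_n has rank strictly less than k. -/

import Mathlib

/-- The row space of a square matrix: the span of its rows. -/
def rowSpace {K : Type*} [Field K] {n : ℕ} (A : Matrix (Fin n) (Fin n) K) :
    Submodule K (Fin n → K) :=
  Submodule.span K (Set.range A)

open Polynomial LinearMap

/-- The linear functional `w ↦ w ⬝ᵥ x`. -/
private def dotLin {K : Type*} [Field K] {n : ℕ} (x : Fin n → K) :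
    (Fin n → K) →ₗ[K] K where
  toFun w := dotProduct w x
  map_add' a b := by simp [add_dotProduct]
  map_smul' c a := by simp [smul_dotProduct]

private lemma mem_ker_iff_rowSpace {K : Type*} [Field K] {n : ℕ}
    (A : Matrix (Fin n) (Fin n) K) (x : Fin n → K) :
    A.mulVecLin x = 0 ↔ rowSpace A ≤ LinearMap.ker (dotLin x) := by
  rw [rowSpace, Submodule.span_le]
  constructor
  · intro h w hw
    obtain ⟨i, rfl⟩ := hw
    have : A.mulVec x i = 0 := by rw [Matrix.mulVecLin_apply] at h; rw [h]; rfl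
    simpa [dotLin, Matrix.mulVec, LinearMap.mem_ker] using this
  · intro h
    funext i
    have := h (Set.mem_range_self (f := A) i)
    simpa [dotLin, LinearMap.mem_ker, Matrix.mulVecLin_apply, Matrix.mulVec] using this

private lemma ker_eq_of_rowSpace_eq {K : Type*} [Field K] {n : ℕ}
    {A B : Matrix (Fin n) (Fin n) K} (h : rowSpace A = rowSpace B) :
    LinearMap.ker A.mulVecLin = LinearMap.ker B.mulVecLin := by
  ext x
  simp only [LinearMap.mem_ker, mem_ker_iff_rowSpace, h]

/-- Over a field in which every polynomial of degree exactly `n` has a root,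
given `n` matrices of rank `k ≥ 2` with a common row space, some non-trivial
linear combination has rank strictly less than `k`. -/
theorem exists_combination_smaller_rank
    {K : Type*} [Field K] {n k : ℕ} (hn : 2 ≤ n) (hk : 2 ≤ k)
    (hK : ∀ p : Polynomial K, p.degree = n → ∃ x : K, p.eval x = 0)
    (B : Fin n → Matrix (Fin n) (Fin n) K)
    (hrank : ∀ i, (B i).rank = k)
    (hrow : ∀ i j, rowSpace (B i) = rowSpace (B j)) :
    ∃ lam : Fin n → K, lam ≠ 0 ∧ (∑ i, lam i • B i).rank < k := by
  have hn0 : 0 < n := by omega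
  let i₀ : Fin n := ⟨0, hn0⟩
  -- the common kernel
  set U : Submodule K (Fin n → K) := LinearMap.ker (B i₀).mulVecLin with hU
  have hker : ∀ i, LinearMap.ker (B i).mulVecLin = U :=
    fun i => ker_eq_of_rowSpace_eq (hrow i i₀)
  -- dimension of U
  have hrr : ∀ i : Fin n, (B i).rank + Module.finrank K U = n := by
    intro i
    have := LinearMap.finrank_range_add_finrank_ker (B i).mulVecLin
    rw [hker i] at this
    simpa [Matrix.rank, Module.finrank_pi] using this
  have hUdim : Module.finrank K U = n - k := by
    have := hrr i₀; rw [hrank i₀] at this; omega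
  have hkn : k ≤ n := by have := hrr i₀; rw [hrank i₀] at this; omega
  -- pick u₁, u₂ independent modulo U
  have hQdim : Module.finrank K ((Fin n → K) ⧸ U) = k := by
    have := Submodule.finrank_quotient_add_finrank U
    rw [hUdim, Module.finrank_pi, Fintype.card_fin] at this
    omega
  let b := Module.finBasis K ((Fin n → K) ⧸ U)
  rw [hQdim] at b
  obtain ⟨u₁, hu₁⟩ := Submodule.Quotient.mk_surjective U (b ⟨0, by omega⟩)
  obtain ⟨u₂, hu₂⟩ := Submodule.Quotient.mk_surjective U (b ⟨1, by omega⟩)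
  have h01 : (⟨0, by omega⟩ : Fin k) ≠ ⟨1, by omega⟩ := by
    simp [Fin.ext_iff]
  -- key independence: for any s, s•u₁ + u₂ ∉ U ; and u₁ ∉ U
  have hcomb : ∀ s : K, s • u₁ + u₂ ∉ U := by
    intro s hs
    have : (Submodule.Quotient.mk (s • u₁ + u₂) : (Fin n → K) ⧸ U) = 0 :=
      (Submodule.Quotient.mk_eq_zero U).2 hs
    rw [Submodule.Quotient.mk_add, Submodule.Quotient.mk_smul, hu₁, hu₂] at this
    have happ := congrArg (fun q => b.repr q ⟨1, by omega⟩) this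
    simp [map_add, map_smul, Module.Basis.repr_self, Finsupp.single_apply, h01] at happ
  have hu₁U : u₁ ∉ U := by
    intro hs
    have : (Submodule.Quotient.mk u₁ : (Fin n → K) ⧸ U) = 0 :=
      (Submodule.Quotient.mk_eq_zero U).2 hs
    rw [hu₁] at this
    exact b.ne_zero _ this
  -- the matrix of columns B_j v
  let N : (Fin n → K) → Matrix (Fin n) (Fin n) K :=
    fun v => Matrix.of (fun i j => (B j).mulVec v i)
  -- main claim: there is v ∉ U with det (N v) = 0
  have main : ∃ v : Fin n → K, v ∉ U ∧ (N v).det = 0 := by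
    by_cases hA : (N u₁).det = 0
    · exact ⟨u₁, hu₁U, hA⟩
    · -- polynomial matrix
      set A := N u₁ with hAdef
      set Cm := N u₂ with hCdef
      let M : Matrix (Fin n) (Fin n) K[X] :=
        (X : K[X]) • A.map Polynomial.C + Cm.map Polynomial.C
      have hfact : M = A.map Polynomial.C * ((X : K[X]) • (1 : Matrix (Fin n) (Fin n) K[X])
          + (A⁻¹ * Cm).map Polynomial.C) := by
        have hAinv : A * A⁻¹ = 1 := Matrix.mul_nonsing_inv A (isUnit_iff_ne_zero.2 hA)
        rw [Matrix.mul_add, Matrix.mul_smul, Matrix.mul_one,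
          ← Matrix.map_mul, ← Matrix.mul_assoc, hAinv, Matrix.one_mul]
      have hchar : (X : K[X]) • (1 : Matrix (Fin n) (Fin n) K[X]) + (A⁻¹ * Cm).map Polynomial.C
          = Matrix.charmatrix (-(A⁻¹ * Cm)) := by
        ext i j
        rw [Matrix.charmatrix_apply]
        by_cases h : i = j
        · subst h
          simp only [Matrix.add_apply, Matrix.smul_apply, Matrix.one_apply_eq,
            Matrix.map_apply, Matrix.diagonal_apply_eq, Matrix.neg_apply, map_neg,
            sub_neg_eq_add, smul_eq_mul, mul_one]
        · simp only [Matrix.add_apply, Matrix.smul_apply, Matrix.one_apply_ne h,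
            Matrix.map_apply, Matrix.diagonal_apply_ne _ h, Matrix.neg_apply, map_neg,
            sub_neg_eq_add, smul_eq_mul, mul_zero, zero_add]
      have hdeg : M.det.degree = n := by
        rw [hfact, Matrix.det_mul, hchar]
        have h1 : (A.map Polynomial.C).det = Polynomial.C A.det := by
          exact (RingHom.map_det (C : K →+* K[X]) A).symm
        rw [h1, ← Matrix.charpoly]
        rw [Polynomial.degree_mul, Polynomial.degree_C hA,
          Matrix.charpoly_degree_eq_dim]
        simp
      obtain ⟨s, hs⟩ := hK M.det hdeg
      refine ⟨s • u₁ + u₂, hcomb s, ?_⟩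
      have hmap : M.map (Polynomial.evalRingHom s) = N (s • u₁ + u₂) := by
        ext i j
        simp only [M, Matrix.map_apply, Matrix.add_apply, Matrix.smul_apply,
          smul_eq_mul, Polynomial.coe_evalRingHom, Polynomial.eval_add,
          Polynomial.eval_mul, Polynomial.eval_X, Polynomial.eval_C, hAdef, hCdef,
          N, Matrix.of_apply, Matrix.mulVec_add, Matrix.mulVec_smul, Pi.add_apply,
          Pi.smul_apply]
      rw [← hmap, ← RingHom.mapMatrix_apply, ← RingHom.map_det]
      simpa using hs
  obtain ⟨v, hvU, hvdet⟩ := main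
  -- get the nontrivial combination
  obtain ⟨lam, hlam0, hlam⟩ := (Matrix.exists_mulVec_eq_zero_iff).2 hvdet
  refine ⟨lam, hlam0, ?_⟩
  set S : Matrix (Fin n) (Fin n) K := ∑ i, lam i • B i with hS
  have key : ∀ x : Fin n → K, S.mulVec x = ∑ j, lam j • (B j).mulVec x := by
    intro x
    funext i
    simp only [hS, Matrix.mulVec, dotProduct, Matrix.sum_apply,
      Matrix.smul_apply, Finset.sum_apply, Pi.smul_apply, smul_eq_mul, Finset.sum_mul]
    rw [Finset.sum_comm]
    refine Finset.sum_congr rfl fun j _ => ?_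
    rw [Finset.mul_sum]
    exact Finset.sum_congr rfl fun l _ => by ring
  -- v is in the kernel of S
  have hvker : S.mulVecLin v = 0 := by
    rw [Matrix.mulVecLin_apply, key v]
    funext i
    have h1 : (N v).mulVec lam i = 0 := by rw [hlam]; rfl
    simp only [Matrix.mulVec, dotProduct, N, Matrix.of_apply] at h1
    simpa [Finset.sum_apply, Pi.smul_apply, smul_eq_mul, mul_comm, Matrix.mulVec, dotProduct] using h1
  -- U is contained in the kernel of S
  have hUker : U ≤ LinearMap.ker S.mulVecLin := by
    intro x hx
    have hBx : ∀ j, (B j).mulVec x = 0 := by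
      intro j
      have : x ∈ LinearMap.ker (B j).mulVecLin := (hker j).symm ▸ hx
      simpa [Matrix.mulVecLin_apply] using this
    rw [LinearMap.mem_ker, Matrix.mulVecLin_apply, key x]
    simp [hBx]
  -- dimension count
  have hlt : U < U ⊔ Submodule.span K {v} := by
    refine lt_of_le_of_ne le_sup_left ?_
    intro h
    apply hvU
    rw [h]
    exact Submodule.mem_sup_right (Submodule.mem_span_singleton_self v)
  have hsub : U ⊔ Submodule.span K {v} ≤ LinearMap.ker S.mulVecLin := by
    refine sup_le hUker ?_
    rw [Submodule.span_le, Set.singleton_subset_iff]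
    exact hvker
  have h1 : Module.finrank K U < Module.finrank K ↥(U ⊔ Submodule.span K {v}) :=
    Submodule.finrank_lt_finrank_of_lt hlt
  have h2 : Module.finrank K ↥(U ⊔ Submodule.span K {v}) ≤
      Module.finrank K (LinearMap.ker S.mulVecLin) :=
    Submodule.finrank_mono hsub
  have h3 : S.rank + Module.finrank K (LinearMap.ker S.mulVecLin) = n := by
    have := LinearMap.finrank_range_add_finrank_ker S.mulVecLin
    simpa [Matrix.rank, Module.finrank_pi] using this
  omega
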